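/- Let n ≥ 5. Then every almost self-centered graph of order n has independence number at most n − 2, and there exists an almost self-centered graph of order n with independence number exactly n − 2. Hence the maximum independence number of an almost self-centered graph of order n is n − 2. -/

import Mathlib

open SimpleGraph

/-- The eccentricity of a vertex `v`: the maximum distance from `v` to any vertex. -/
noncomputable def graphEcc {V : Type*} [Fintype V] (G : SimpleGraph V) (v : V) : ℕ :=
  Finset.univ.sup fun u => G.dist v u

/-- The radius of a graph: the minimum eccentricity over all vertices. -/
noncomputable def graphRadius {V : Type*} [Fintype V] (G : SimpleGraph V) : ℕ :=
  sInf (Set.range (graphEcc G))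

/-- The diameter of a graph: the maximum eccentricity over all vertices. -/
noncomputable def graphDiam {V : Type*} [Fintype V] (G : SimpleGraph V) : ℕ :=
  Finset.univ.sup (graphEcc G)

/-- A connected graph of order `n` is almost self-centered if it has exactly `n - 2`
central vertices (vertices whose eccentricity equals the radius). -/
def IsAlmostSelfCentered {V : Type*} [Fintype V] (G : SimpleGraph V) : Prop :=
  G.Connected ∧ Nat.card {v : V | graphEcc G v = graphRadius G} = Fintype.card V - 2

/-- A connected graph of order `n` is almost peripheral if it has exactly `n - 1`
peripheral vertices (vertices whose eccentricity equals the diameter). -/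
def IsAlmostPeripheral {V : Type*} [Fintype V] (G : SimpleGraph V) : Prop :=
  G.Connected ∧ Nat.card {v : V | graphEcc G v = graphDiam G} = Fintype.card V - 1

/-- The independence number of a graph: the maximum cardinality of a set of pairwise
nonadjacent vertices. -/
noncomputable def graphIndepNum {V : Type*} [Fintype V] (G : SimpleGraph V) : ℕ :=
  sSup {k | ∃ s : Set V, s.Pairwise (fun u v => ¬ G.Adj u v) ∧ s.ncard = k}

lemma ecc_le {V : Type*} [Fintype V] {G : SimpleGraph V} {v : V} {k : ℕ}
    (h : ∀ u, G.dist v u ≤ k) : graphEcc G v ≤ k :=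
  Finset.sup_le fun u _ => h u

lemma dist_le_ecc {V : Type*} [Fintype V] {G : SimpleGraph V} (v u : V) :
    G.dist v u ≤ graphEcc G v :=
  Finset.le_sup (Finset.mem_univ u)

lemma asc_indep_set_le {V : Type*} [Fintype V] (G : SimpleGraph V)
    (h5 : 5 ≤ Fintype.card V) (hASC : IsAlmostSelfCentered G) {s : Set V}
    (hs : s.Pairwise fun u v => ¬ G.Adj u v) : s.ncard ≤ Fintype.card V - 2 := by
  obtain ⟨hconn, hcard⟩ := hASC
  have hnt : Nontrivial V := Fintype.one_lt_card_iff_nontrivial.mp (by omega)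
  by_contra h
  push_neg at h
  have hcompl : s.ncard + sᶜ.ncard = Fintype.card V := by
    rw [Set.ncard_add_ncard_compl, Nat.card_eq_fintype_card]
  have hc1 : sᶜ.ncard ≤ 1 := by omega
  rcases Nat.le_one_iff_eq_zero_or_eq_one.mp hc1 with hx | hx
  · -- s = univ, but connected graph has an edge
    have hsu : s = Set.univ := by
      have h0 : sᶜ = ∅ := (Set.ncard_eq_zero (Set.toFinite _)).mp hx
      simpa [Set.compl_empty_iff] using h0
    obtain ⟨v, w, hvw⟩ := hnt
    obtain ⟨p⟩ := hconn v w
    cases p with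
    | nil => exact hvw rfl
    | cons hadj q =>
      exact hs (by simp [hsu]) (by simp [hsu]) hadj.ne hadj
  · -- sᶜ = {u} : star
    obtain ⟨u, hu⟩ := Set.ncard_eq_one.mp hx
    have hmem : ∀ v : V, v ≠ u → v ∈ s := by
      intro v hv
      by_contra hvs
      have hm : v ∈ sᶜ := hvs
      rw [hu] at hm
      exact hv hm
    have hadj : ∀ v : V, v ≠ u → G.Adj u v := by
      intro v hv
      obtain ⟨p⟩ := hconn v u
      cases p with
      | nil => exact absurd rfl hv
      | @cons _ b _ hvb q =>
        by_cases hb : b = u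
        · subst hb; exact hvb.symm
        · exact absurd hvb (hs (hmem _ hv) (hmem _ hb) hvb.ne)
    have hnadj : ∀ v w : V, v ≠ u → w ≠ u → v ≠ w → ¬ G.Adj v w := by
      intro v w hv hw hvw
      exact hs (hmem _ hv) (hmem _ hw) hvw
    have heccu : graphEcc G u = 1 := by
      apply le_antisymm
      · apply ecc_le
        intro w
        by_cases hw : w = u
        · subst hw; simp [SimpleGraph.dist_self]
        · rw [dist_eq_one_iff_adj.mpr (hadj w hw)]
      · obtain ⟨v, hv⟩ := exists_ne u
        calc 1 = G.dist u v := (dist_eq_one_iff_adj.mpr (hadj v hv)).symm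
        _ ≤ _ := dist_le_ecc u v
    have heccv : ∀ v : V, v ≠ u → graphEcc G v = 2 := by
      intro v hv
      have hw : ∃ w : V, w ≠ v ∧ w ≠ u := by
        by_contra hc
        push_neg at hc
        have hsub : (Set.univ : Set V) ⊆ {v, u} := by
          intro x _
          rcases eq_or_ne x v with rfl | hxv
          · simp
          · simp [hc x hxv]
        have hle := Set.ncard_le_ncard hsub (Set.toFinite _)
        rw [Set.ncard_univ, Nat.card_eq_fintype_card] at hle
        have h2 : ({v, u} : Set V).ncard ≤ 2 :=
          (Set.ncard_insert_le _ _).trans (by simp [Set.ncard_singleton])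
        omega
      obtain ⟨w, hwv, hwu⟩ := hw
      apply le_antisymm
      · apply ecc_le
        intro x
        by_cases hx : x = v
        · subst hx; simp [SimpleGraph.dist_self]
        by_cases hxu : x = u
        · subst hxu
          rw [SimpleGraph.dist_comm, dist_eq_one_iff_adj.mpr (hadj v hv)]; omega
        · have hd := dist_le (Walk.cons (hadj v hv).symm (Walk.cons (hadj x hxu) Walk.nil))
          simpa using hd
      · have hdvw : 2 ≤ G.dist v w := by
          have hpos : 0 < G.dist v w := (hconn.pos_dist_of_ne (Ne.symm hwv))
          have hne1 : G.dist v w ≠ 1 := by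
            intro h1
            exact hnadj v w hv hwu (Ne.symm hwv) (dist_eq_one_iff_adj.mp h1)
          omega
        exact hdvw.trans (dist_le_ecc v w)
    have hrad : graphRadius G = 1 := by
      apply le_antisymm
      · exact Nat.sInf_le ⟨u, heccu⟩
      · apply le_csInf ⟨graphEcc G u, Set.mem_range_self u⟩
        rintro _ ⟨x, rfl⟩
        obtain ⟨y, hy⟩ := exists_ne x
        have hpos : 0 < G.dist x y := hconn.pos_dist_of_ne (Ne.symm hy)
        have hxy := dist_le_ecc (G := G) x y
        omega
    have hcen : {v : V | graphEcc G v = graphRadius G} = {u} := by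
      ext v
      simp only [Set.mem_setOf_eq, Set.mem_singleton_iff, hrad]
      constructor
      · intro hv
        by_contra hvu
        rw [heccv v hvu] at hv
        omega
      · rintro rfl; exact heccu
    rw [hcen] at hcard
    simp at hcard
    omega

/-- The example graph: `K_{2,n-3}` with parts `{0,1}` and `{3,…,n-1}`, plus a pendant
vertex `2` attached to `0`. -/
def ascG (n : ℕ) : SimpleGraph (Fin n) where
  Adj u v :=
    (u.val = 0 ∧ (v.val = 2 ∨ 3 ≤ v.val)) ∨ (v.val = 0 ∧ (u.val = 2 ∨ 3 ≤ u.val)) ∨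
    (u.val = 1 ∧ 3 ≤ v.val) ∨ (v.val = 1 ∧ 3 ≤ u.val)
  symm := by constructor; intro u v h; tauto
  loopless := by constructor; intro u h; omega

section example_graph
variable {n : ℕ} (hn : 5 ≤ n)

lemma ascG_adj {u v : Fin n} : (ascG n).Adj u v ↔
    (u.val = 0 ∧ (v.val = 2 ∨ 3 ≤ v.val)) ∨ (v.val = 0 ∧ (u.val = 2 ∨ 3 ≤ u.val)) ∨
    (u.val = 1 ∧ 3 ≤ v.val) ∨ (v.val = 1 ∧ 3 ≤ u.val) := Iff.rfl

include hn

-- specific vertices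
private def v0 : Fin n := ⟨0, by omega⟩
private def v1 : Fin n := ⟨1, by omega⟩
private def v2 : Fin n := ⟨2, by omega⟩
private def v3 : Fin n := ⟨3, by omega⟩

lemma ascG_conn : (ascG n).Connected := by
  have h03 : (ascG n).Adj (v0 hn) (v3 hn) := by rw [ascG_adj]; simp [v0, v3]
  have key : ∀ u : Fin n, (ascG n).Reachable (v0 hn) u := by
    intro u
    rcases Nat.lt_or_ge u.val 3 with h3 | h3
    · interval_cases hu : u.val
      · have : u = v0 hn := by apply Fin.ext; simp [v0, hu]
        rw [this]
      · have h31 : (ascG n).Adj (v3 hn) u := by rw [ascG_adj]; simp [v3]; omega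
        exact (h03.reachable).trans h31.reachable
      · have h02 : (ascG n).Adj (v0 hn) u := by rw [ascG_adj]; simp [v0]; omega
        exact h02.reachable
    · have h0u : (ascG n).Adj (v0 hn) u := by rw [ascG_adj]; simp [v0]; omega
      exact h0u.reachable
  haveI : Nonempty (Fin n) := ⟨v0 hn⟩
  exact Connected.mk fun u v => (key u).symm.trans (key v)



lemma two_le_ascdist {u v : Fin n} (hne : u ≠ v) (hna : ¬ (ascG n).Adj u v) :
    2 ≤ (ascG n).dist u v := by
  have hpos : 0 < (ascG n).dist u v := (ascG_conn hn).pos_dist_of_ne hne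
  have hne1 : (ascG n).dist u v ≠ 1 := fun h1 => hna (dist_eq_one_iff_adj.mp h1)
  omega

-- distances
lemma dist01 : (ascG n).dist (v0 hn) (v1 hn) = 2 := by
  apply le_antisymm
  · have h03 : (ascG n).Adj (v0 hn) (v3 hn) := by rw [ascG_adj]; simp [v0, v3]
    have h31 : (ascG n).Adj (v3 hn) (v1 hn) := by rw [ascG_adj]; simp [v3, v1]
    have hd := dist_le (Walk.cons h03 (Walk.cons h31 Walk.nil))
    simpa using hd
  · apply two_le_ascdist hn
    · intro h; apply Fin.val_eq_of_eq at h; simp [v0, v1] at h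
    · rw [ascG_adj]; simp [v0, v1]
lemma dist02 : (ascG n).dist (v0 hn) (v2 hn) = 1 := by
  rw [dist_eq_one_iff_adj, ascG_adj]; simp [v0, v2]
lemma dist0b {u : Fin n} (hu : 3 ≤ u.val) : (ascG n).dist (v0 hn) u = 1 := by
  rw [dist_eq_one_iff_adj, ascG_adj]; simp [v0]; omega
lemma dist1b {u : Fin n} (hu : 3 ≤ u.val) : (ascG n).dist (v1 hn) u = 1 := by
  rw [dist_eq_one_iff_adj, ascG_adj]; simp [v1]; omega
lemma dist2b {u : Fin n} (hu : 3 ≤ u.val) : (ascG n).dist (v2 hn) u = 2 := by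
  apply le_antisymm
  · have h20 : (ascG n).Adj (v2 hn) (v0 hn) := by rw [ascG_adj]; simp [v0, v2]
    have h0u : (ascG n).Adj (v0 hn) u := by rw [ascG_adj]; simp [v0]; omega
    have hd := dist_le (Walk.cons h20 (Walk.cons h0u Walk.nil))
    simpa using hd
  · apply two_le_ascdist hn
    · intro h; apply Fin.val_eq_of_eq at h; simp [v2] at h; omega
    · rw [ascG_adj]; simp [v2]; omega
lemma distbb {u w : Fin n} (hu : 3 ≤ u.val) (hw : 3 ≤ w.val) (huw : u ≠ w) :
    (ascG n).dist u w = 2 := by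
  apply le_antisymm
  · have h1 : (ascG n).Adj u (v0 hn) := by rw [ascG_adj]; simp [v0]; omega
    have h2 : (ascG n).Adj (v0 hn) w := by rw [ascG_adj]; simp [v0]; omega
    have hd := dist_le (Walk.cons h1 (Walk.cons h2 Walk.nil))
    simpa using hd
  · apply two_le_ascdist hn huw
    rw [ascG_adj]; omega
lemma dist12 : (ascG n).dist (v1 hn) (v2 hn) = 3 := by
  apply le_antisymm
  · have h13 : (ascG n).Adj (v1 hn) (v3 hn) := by rw [ascG_adj]; simp [v1, v3]
    have h30 : (ascG n).Adj (v3 hn) (v0 hn) := by rw [ascG_adj]; simp [v0, v3]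
    have h02 : (ascG n).Adj (v0 hn) (v2 hn) := by rw [ascG_adj]; simp [v0, v2]
    have hd := dist_le (Walk.cons h13 (Walk.cons h30 (Walk.cons h02 Walk.nil)))
    simpa using hd
  · have h2 : 2 ≤ (ascG n).dist (v1 hn) (v2 hn) := by
      apply two_le_ascdist hn
      · intro h; apply Fin.val_eq_of_eq at h; simp [v1, v2] at h
      · rw [ascG_adj]; simp [v1, v2]
    rcases Nat.lt_or_ge ((ascG n).dist (v1 hn) (v2 hn)) 3 with h3 | h3
    · exfalso
      have hd2 : (ascG n).dist (v1 hn) (v2 hn) = 2 := by omega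
      obtain ⟨p, hp⟩ := ((ascG_conn hn) (v1 hn) (v2 hn)).exists_walk_length_eq_dist
      rw [hd2] at hp
      have h0 := p.adj_getVert_succ (by omega : 0 < p.length)
      have h1 := p.adj_getVert_succ (by omega : 1 < p.length)
      rw [p.getVert_zero] at h0
      rw [show (1:ℕ)+1 = p.length by omega, p.getVert_length] at h1
      rw [ascG_adj] at h0 h1
      simp [v1, v2] at h0 h1
      omega
    · exact h3

-- eccentricities
lemma ecc0 : graphEcc (ascG n) (v0 hn) = 2 := by
  apply le_antisymm
  · apply ecc_le
    intro u
    rcases Nat.lt_or_ge u.val 3 with h3 | h3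
    · interval_cases hu : u.val
      · have : u = v0 hn := Fin.ext (by simp [v0, hu])
        rw [this]; simp [SimpleGraph.dist_self]
      · have : u = v1 hn := Fin.ext (by simp [v1, hu])
        rw [this, dist01 hn]
      · have : u = v2 hn := Fin.ext (by simp [v2, hu])
        rw [this, dist02 hn]; omega
    · rw [dist0b hn h3]; omega
  · rw [← dist01 hn]; exact dist_le_ecc _ _
lemma ecc1 : graphEcc (ascG n) (v1 hn) = 3 := by
  apply le_antisymm
  · apply ecc_le
    intro u
    rcases Nat.lt_or_ge u.val 3 with h3 | h3
    · interval_cases hu : u.val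
      · have : u = v0 hn := Fin.ext (by simp [v0, hu])
        rw [this, SimpleGraph.dist_comm, dist01 hn]; omega
      · have : u = v1 hn := Fin.ext (by simp [v1, hu])
        rw [this]; simp [SimpleGraph.dist_self]
      · have : u = v2 hn := Fin.ext (by simp [v2, hu])
        rw [this, dist12 hn]
    · rw [dist1b hn h3]; omega
  · rw [← dist12 hn]; exact dist_le_ecc _ _
lemma ecc2 : graphEcc (ascG n) (v2 hn) = 3 := by
  apply le_antisymm
  · apply ecc_le
    intro u
    rcases Nat.lt_or_ge u.val 3 with h3 | h3
    · interval_cases hu : u.val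
      · have : u = v0 hn := Fin.ext (by simp [v0, hu])
        rw [this, SimpleGraph.dist_comm, dist02 hn]; omega
      · have : u = v1 hn := Fin.ext (by simp [v1, hu])
        rw [this, SimpleGraph.dist_comm, dist12 hn]
      · have : u = v2 hn := Fin.ext (by simp [v2, hu])
        rw [this]; simp [SimpleGraph.dist_self]
    · rw [dist2b hn h3]; omega
  · calc (3:ℕ) = (ascG n).dist (v2 hn) (v1 hn) := by
          rw [SimpleGraph.dist_comm, dist12 hn]
      _ ≤ _ := dist_le_ecc _ _
lemma eccb {w : Fin n} (hw : 3 ≤ w.val) : graphEcc (ascG n) w = 2 := by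
  apply le_antisymm
  · apply ecc_le
    intro u
    rcases Nat.lt_or_ge u.val 3 with h3 | h3
    · interval_cases hu : u.val
      · have : u = v0 hn := Fin.ext (by simp [v0, hu])
        rw [this, SimpleGraph.dist_comm, dist0b hn hw]; omega
      · have : u = v1 hn := Fin.ext (by simp [v1, hu])
        rw [this, SimpleGraph.dist_comm, dist1b hn hw]; omega
      · have : u = v2 hn := Fin.ext (by simp [v2, hu])
        rw [this, SimpleGraph.dist_comm, dist2b hn hw]
    · rcases eq_or_ne w u with rfl | hne
      · simp [SimpleGraph.dist_self]
      · rw [distbb hn hw h3 hne]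
  · rw [← dist2b hn hw, SimpleGraph.dist_comm]; exact dist_le_ecc _ _

lemma ascRadius : graphRadius (ascG n) = 2 := by
  apply le_antisymm
  · exact Nat.sInf_le ⟨v0 hn, ecc0 hn⟩
  · apply le_csInf ⟨_, Set.mem_range_self (v0 hn)⟩
    rintro _ ⟨x, rfl⟩
    rcases Nat.lt_or_ge x.val 3 with h3 | h3
    · interval_cases hx : x.val
      · have : x = v0 hn := Fin.ext (by simp [v0, hx])
        rw [this, ecc0 hn]
      · have : x = v1 hn := Fin.ext (by simp [v1, hx])
        rw [this, ecc1 hn]; omega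
      · have : x = v2 hn := Fin.ext (by simp [v2, hx])
        rw [this, ecc2 hn]; omega
    · rw [eccb hn h3]

lemma ascASC : IsAlmostSelfCentered (ascG n) := by
  refine ⟨ascG_conn hn, ?_⟩
  have hcen : {v : Fin n | graphEcc (ascG n) v = graphRadius (ascG n)} =
      ({v1 hn, v2 hn} : Set (Fin n))ᶜ := by
    ext x
    simp only [Set.mem_setOf_eq, ascRadius hn, Set.mem_compl_iff, Set.mem_insert_iff,
      Set.mem_singleton_iff]
    rcases Nat.lt_or_ge x.val 3 with h3 | h3
    · interval_cases hx : x.val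
      · have hx0 : x = v0 hn := Fin.ext (by simp [v0, hx])
        subst hx0
        simp only [ecc0 hn]
        constructor
        · rintro - (h | h) <;> (apply Fin.val_eq_of_eq at h; simp [v0, v1, v2] at h)
        · intros; trivial
      · have hx1 : x = v1 hn := Fin.ext (by simp [v1, hx])
        subst hx1
        simp [ecc1 hn]
      · have hx2 : x = v2 hn := Fin.ext (by simp [v2, hx])
        subst hx2
        simp [ecc2 hn]
    · simp only [eccb hn h3]
      constructor
      · rintro - (h | h) <;> (apply Fin.val_eq_of_eq at h; simp [v1, v2] at h; omega)
      · intros; trivial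
  rw [hcen, Nat.card_coe_set_eq]
  have h12 : ({v1 hn, v2 hn} : Set (Fin n)).ncard = 2 := by
    apply Set.ncard_pair
    intro h; apply Fin.val_eq_of_eq at h; simp [v1, v2] at h
  have := Set.ncard_add_ncard_compl ({v1 hn, v2 hn} : Set (Fin n))
  rw [Nat.card_eq_fintype_card, Fintype.card_fin] at this
  simp [Fintype.card_fin]
  omega

omit hn in
lemma ascIndepSet : ({v : Fin n | 2 ≤ v.val}).Pairwise
    (fun u v => ¬ (ascG n).Adj u v) := by
  intro u hu v hv hne
  simp only [Set.mem_setOf_eq] at hu hv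
  rw [ascG_adj]
  omega

lemma ascIndepSetCard : ({v : Fin n | 2 ≤ v.val}).ncard = n - 2 := by
  have hset : {v : Fin n | 2 ≤ v.val} = ({v0 hn, v1 hn} : Set (Fin n))ᶜ := by
    ext x
    simp only [Set.mem_setOf_eq, Set.mem_compl_iff, Set.mem_insert_iff,
      Set.mem_singleton_iff, Fin.ext_iff, v0, v1]
    omega
  rw [hset]
  have h01 : ({v0 hn, v1 hn} : Set (Fin n)).ncard = 2 := by
    apply Set.ncard_pair
    simp [Fin.ext_iff, v0, v1]
  have := Set.ncard_add_ncard_compl ({v0 hn, v1 hn} : Set (Fin n))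
  rw [Nat.card_eq_fintype_card, Fintype.card_fin] at this
  omega

end example_graph

theorem max_indepNum_almostSelfCentered (n : ℕ) (h5 : 5 ≤ n) :
    (∀ (V : Type) [Fintype V] (G : SimpleGraph V), Fintype.card V = n →
      IsAlmostSelfCentered G → graphIndepNum G ≤ n - 2) ∧
    (∃ G : SimpleGraph (Fin n), IsAlmostSelfCentered G ∧ graphIndepNum G = n - 2) := by
  have hub : ∀ (V : Type) [Fintype V] (G : SimpleGraph V), Fintype.card V = n →
      IsAlmostSelfCentered G → graphIndepNum G ≤ n - 2 := by
    intro V _ G hcard hASC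
    unfold graphIndepNum
    refine csSup_le ⟨0, ∅, Set.pairwise_empty _, Set.ncard_empty _⟩ ?_
    rintro k ⟨s, hp, rfl⟩
    have hle := asc_indep_set_le G (by omega) hASC hp
    omega
  refine ⟨hub, ascG n, ascASC h5, ?_⟩
  apply le_antisymm
  · exact hub (Fin n) (ascG n) (Fintype.card_fin n) (ascASC h5)
  · unfold graphIndepNum
    apply le_csSup
    · refine ⟨n, ?_⟩
      rintro k ⟨s, hp, rfl⟩
      calc s.ncard ≤ (Set.univ : Set (Fin n)).ncard :=
            Set.ncard_le_ncard (Set.subset_univ _) Set.finite_univ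
        _ = n := by rw [Set.ncard_univ, Nat.card_eq_fintype_card, Fintype.card_fin]
    · exact ⟨{v : Fin n | 2 ≤ v.val}, ascIndepSet (n := n), ascIndepSetCard h5⟩
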